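/- The value of the double series h₀(0,0) = (16 s₊)/(3π²) Σ_{m,n odd ≥ 1} (m n)/((m² + n²)²) · (−1)^{(m+n−2)/2} is strictly positive; in fact it is at least s₊/6 − s₊/9 = s₊/18 > 0, for any s₊ > 0. -/

import Mathlib

open Real Filter Finset


private lemma abel_bound (c : ℕ → ℝ) (hpos : ∀ j, 0 ≤ c j) (hsum : Summable c)
    {M : ℝ} (hM : ∀ j, c j ≤ M) (J : ℕ)
    (hinc : ∀ j, j + 2 ≤ J → c j ≤ c (j + 1))
    (hdec : ∀ j, J ≤ j → c (j + 1) ≤ c j) :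
    |∑' j, (-1 : ℝ) ^ j * c j| ≤ M := by
  have hM0 : 0 ≤ M := (hpos 0).trans (hM 0)
  set A : ℕ → ℝ := fun k => if Even k then 0 else 1 with hA
  have hA0 : ∀ k, 0 ≤ A k := by intro k; simp only [hA]; split <;> norm_num
  have hA1 : ∀ k, A k ≤ 1 := by intro k; simp only [hA]; split <;> norm_num
  have hAd : ∀ k, A (k + 1) - A k = (-1 : ℝ) ^ k := by
    intro k
    rcases Nat.even_or_odd k with h | h
    · have h1 : ¬ Even (k + 1) := by simp [Nat.even_add_one, h]
      simp [hA, h, h1, h.neg_one_pow]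
    · have h1 : Even (k + 1) := by simp [Nat.even_add_one, Nat.not_even_iff_odd.mpr h]
      simp [hA, h1, Nat.not_even_iff_odd.mpr h, h.neg_one_pow]
  set Q : ℕ → ℝ := fun N => ∑ j ∈ range N, A (j + 1) * (c j - c (j + 1)) with hQdef
  set P : ℕ → ℝ := fun N => ∑ j ∈ range N, (-1 : ℝ) ^ j * c j with hPdef
  have hPQ : ∀ N, P (N + 1) = A (N + 1) * c N + Q N := by
    intro N
    induction N with
    | zero => simp [hPdef, hQdef, hA]
    | succ N ih =>
      have h1 : P (N + 2) = P (N + 1) + (-1 : ℝ) ^ (N + 1) * c (N + 1) := by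
        simp [hPdef, Finset.sum_range_succ]
      have h2 : Q (N + 1) = Q N + A (N + 1) * (c N - c (N + 1)) := by
        simp [hQdef, Finset.sum_range_succ]
      rw [h1, ih, h2, ← hAd (N + 1)]; ring
  have hInv : ∀ N, (N < J → c 0 - c N ≤ Q N ∧ Q N ≤ 0) ∧
      (J ≤ N → -M ≤ Q N ∧ Q N ≤ M - c N) := by
    intro N
    induction N with
    | zero =>
      constructor
      · intro _; simp [hQdef]
      · intro hJ0
        simp only [hQdef, range_zero, sum_empty]
        constructor <;> linarith [hM 0, hpos 0]
    | succ N ih =>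
      have hQs : Q (N + 1) = Q N + A (N + 1) * (c N - c (N + 1)) := by
        simp [hQdef, Finset.sum_range_succ]
      have ha0 := hA0 (N + 1); have ha1 := hA1 (N + 1)
      constructor
      · intro h
        have hN : N < J := Nat.lt_of_succ_lt h
        obtain ⟨ih1, ih2⟩ := ih.1 hN
        have hcinc : c N ≤ c (N + 1) := hinc N (by omega)
        have hx : c N - c (N + 1) ≤ 0 := by linarith
        have hlow : c N - c (N + 1) ≤ A (N + 1) * (c N - c (N + 1)) := by nlinarith
        have hup : A (N + 1) * (c N - c (N + 1)) ≤ 0 :=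
          mul_nonpos_of_nonneg_of_nonpos ha0 hx
        exact ⟨by linarith [hQs], by linarith [hQs]⟩
      · intro h
        rcases Nat.lt_or_ge N J with hN | hN
        · obtain ⟨ih1, ih2⟩ := ih.1 hN
          rcases le_or_gt 0 (c N - c (N + 1)) with hx | hx
          · have hlow : 0 ≤ A (N + 1) * (c N - c (N + 1)) := mul_nonneg ha0 hx
            have hup : A (N + 1) * (c N - c (N + 1)) ≤ c N - c (N + 1) := by nlinarith
            exact ⟨by linarith [hQs, hM N, hpos 0], by linarith [hQs, hM N]⟩
          · have hlow : c N - c (N + 1) ≤ A (N + 1) * (c N - c (N + 1)) := by nlinarith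
            have hup : A (N + 1) * (c N - c (N + 1)) ≤ 0 :=
              mul_nonpos_of_nonneg_of_nonpos ha0 hx.le
            exact ⟨by linarith [hQs, hM (N + 1), hpos 0], by linarith [hQs, hM (N + 1)]⟩
        · obtain ⟨ih1, ih2⟩ := ih.2 hN
          have hx : 0 ≤ c N - c (N + 1) := by linarith [hdec N hN]
          have hlow : 0 ≤ A (N + 1) * (c N - c (N + 1)) := mul_nonneg ha0 hx
          have hup : A (N + 1) * (c N - c (N + 1)) ≤ c N - c (N + 1) := by nlinarith
          exact ⟨by linarith [hQs], by linarith [hQs]⟩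
  have hQbd : ∀ N, -M ≤ Q N ∧ Q N ≤ M := by
    intro N
    rcases Nat.lt_or_ge N J with h | h
    · obtain ⟨h1, h2⟩ := (hInv N).1 h
      exact ⟨by linarith [hM N, hpos 0], by linarith⟩
    · obtain ⟨h1, h2⟩ := (hInv N).2 h
      exact ⟨h1, by linarith [hpos N]⟩
  have hsalt : Summable (fun j => (-1 : ℝ) ^ j * c j) := by
    apply Summable.of_norm_bounded hsum
    intro j
    rw [norm_mul, norm_pow, norm_neg, norm_one, one_pow, one_mul]
    exact le_of_eq (abs_of_nonneg (hpos j))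
  have hT : Tendsto P atTop (nhds (∑' j, (-1 : ℝ) ^ j * c j)) := hsalt.hasSum.tendsto_sum_nat
  have hT1 : Tendsto (fun N => P (N + 1)) atTop (nhds (∑' j, (-1 : ℝ) ^ j * c j)) :=
    hT.comp (tendsto_add_atTop_nat 1)
  rw [abs_le]
  constructor
  · refine ge_of_tendsto' hT1 fun N => ?_
    have h1 := (hQbd N).1
    have h2 : 0 ≤ A (N + 1) * c N := mul_nonneg (hA0 _) (hpos N)
    rw [hPQ N]; linarith
  · have hgconv : Tendsto (fun N : ℕ => M + c N) atTop (nhds (M + 0)) :=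
      tendsto_const_nhds.add hsum.tendsto_atTop_zero
    rw [add_zero] at hgconv
    refine le_of_tendsto_of_tendsto' hT1 hgconv fun N => ?_
    have h1 := (hQbd N).2
    have h2 : A (N + 1) * c N ≤ c N := by nlinarith [hA0 (N + 1), hA1 (N + 1), hpos N]
    rw [hPQ N]; linarith

private lemma alt_lower (c : ℕ → ℝ) (hsum : Summable c)
    (hdec : ∀ j, c (j + 1) ≤ c j) (hpos : ∀ j, 0 ≤ c j) :
    c 0 - c 1 ≤ ∑' j, (-1 : ℝ) ^ j * c j := by
  set P : ℕ → ℝ := fun N => ∑ j ∈ range N, (-1 : ℝ) ^ j * c j with hPdef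
  have hsalt : Summable (fun j => (-1 : ℝ) ^ j * c j) := by
    apply Summable.of_norm_bounded hsum
    intro j
    rw [norm_mul, norm_pow, norm_neg, norm_one, one_pow, one_mul]
    exact le_of_eq (abs_of_nonneg (hpos j))
  have hT : Tendsto P atTop (nhds (∑' j, (-1 : ℝ) ^ j * c j)) := hsalt.hasSum.tendsto_sum_nat
  have hmono : ∀ N : ℕ, P 2 ≤ P (2 * N + 2) := by
    intro N
    induction N with
    | zero => simp
    | succ N ih =>
      have e1 : (-1 : ℝ) ^ (2 * N + 2) = 1 := Even.neg_one_pow ⟨N + 1, by ring⟩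
      have e2 : (-1 : ℝ) ^ (2 * N + 2 + 1) = -1 := Odd.neg_one_pow ⟨N + 1, by ring⟩
      have h1 : P (2 * (N + 1) + 2) = P (2 * N + 2) + c (2 * N + 2) - c (2 * N + 2 + 1) := by
        have e : 2 * (N + 1) + 2 = (2 * N + 2) + 1 + 1 := by ring
        rw [e]
        simp only [hPdef, Finset.sum_range_succ, e1, e2]
        ring
      have := hdec (2 * N + 2)
      linarith
  have hsub : Tendsto (fun N : ℕ => 2 * N + 2) atTop atTop :=
    tendsto_atTop_atTop_of_monotone (fun a b hab => by omega) (fun b => ⟨b, by omega⟩)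
  have hT2 : Tendsto (fun N => P (2 * N + 2)) atTop (nhds (∑' j, (-1 : ℝ) ^ j * c j)) :=
    hT.comp hsub
  have hP2 : P 2 = c 0 - c 1 := by
    simp [hPdef, Finset.sum_range_succ]; ring
  calc c 0 - c 1 = P 2 := hP2.symm
    _ ≤ _ := ge_of_tendsto' hT2 hmono

private noncomputable def cc (i j : ℕ) : ℝ :=
  (2 * (i : ℝ) + 1) * (2 * (j : ℝ) + 1) / ((2 * (i : ℝ) + 1) ^ 2 + (2 * (j : ℝ) + 1) ^ 2) ^ 2

private lemma one_le_odd (i : ℕ) : (1 : ℝ) ≤ 2 * (i : ℝ) + 1 := by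
  have : (0:ℝ) ≤ (i:ℝ) := Nat.cast_nonneg i
  linarith

private lemma cc_nonneg (i j : ℕ) : 0 ≤ cc i j := by
  unfold cc
  have h1 := one_le_odd i; have h2 := one_le_odd j
  positivity

private lemma real_cap {m n : ℝ} (hm : 1 ≤ m) (hn : 0 < n) :
    m * n / ((m ^ 2 + n ^ 2) ^ 2) ≤ 1 / (3 * m ^ 2) := by
  rw [div_le_div_iff₀ (by positivity) (by positivity)]
  nlinarith [sq_nonneg (8 * m ^ 2 - 12 * m * n - 3 * n ^ 2), sq_nonneg (8 * m * n - 9 * n ^ 2),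
    sq_nonneg (n ^ 2), sq_nonneg n, sq_nonneg m]

private lemma cc_cap (i j : ℕ) : cc i j ≤ 1 / (3 * (2 * (i : ℝ) + 1) ^ 2) := by
  have := real_cap (one_le_odd i) (show (0:ℝ) < 2 * (j:ℝ) + 1 by linarith [one_le_odd j])
  exact this

private lemma real_dec {m n : ℝ} (hm : 1 ≤ m) (hn : 1 ≤ n) (h : m ^ 2 ≤ 3 * n ^ 2) :
    m * (n + 2) / ((m ^ 2 + (n + 2) ^ 2) ^ 2) ≤ m * n / ((m ^ 2 + n ^ 2) ^ 2) := by
  have hn0 : (0:ℝ) ≤ n := by linarith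
  rw [div_le_div_iff₀ (by positivity) (by positivity)]
  have key : (n + 2) * (m ^ 2 + n ^ 2) ^ 2 ≤ n * (m ^ 2 + (n + 2) ^ 2) ^ 2 := by
    nlinarith [mul_nonneg (mul_nonneg (sub_nonneg.mpr h) (sq_nonneg m)) hn0,
      mul_nonneg (mul_nonneg (sub_nonneg.mpr h) (sq_nonneg n)) hn0, sq_nonneg (m * n), hn]
  nlinarith [mul_le_mul_of_nonneg_left key (show (0:ℝ) ≤ m by linarith)]

private lemma real_inc {m n : ℝ} (hm : 1 ≤ m) (hn : 1 ≤ n) (h : 3 * (n + 2) ^ 2 ≤ m ^ 2) :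
    m * n / ((m ^ 2 + n ^ 2) ^ 2) ≤ m * (n + 2) / ((m ^ 2 + (n + 2) ^ 2) ^ 2) := by
  have hn0 : (0:ℝ) ≤ n := by linarith
  rw [div_le_div_iff₀ (by positivity) (by positivity)]
  have key : n * (m ^ 2 + (n + 2) ^ 2) ^ 2 ≤ (n + 2) * (m ^ 2 + n ^ 2) ^ 2 := by
    nlinarith [mul_nonneg (mul_nonneg (sub_nonneg.mpr h) (sq_nonneg m)) hn0,
      mul_nonneg (mul_nonneg (sub_nonneg.mpr h) (sq_nonneg n)) hn0,
      mul_nonneg (sub_nonneg.mpr h) (sq_nonneg m), mul_nonneg (sub_nonneg.mpr h) (sq_nonneg n),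
      hn, sq_nonneg (m * n)]
  nlinarith [mul_le_mul_of_nonneg_left key (show (0:ℝ) ≤ m by linarith)]

private lemma cc_succ (i j : ℕ) :
    cc i (j + 1) = (2 * (i:ℝ) + 1) * ((2 * (j:ℝ) + 1) + 2)
      / (((2 * (i:ℝ) + 1) ^ 2 + ((2 * (j:ℝ) + 1) + 2) ^ 2) ^ 2) := by
  unfold cc; push_cast; ring_nf

private lemma cc_dec (i j : ℕ) (h : (2 * (i:ℝ) + 1) ^ 2 ≤ 3 * (2 * (j:ℝ) + 1) ^ 2) :
    cc i (j + 1) ≤ cc i j := by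
  rw [cc_succ]
  exact real_dec (one_le_odd i) (one_le_odd j) h

private lemma cc_inc (i j : ℕ) (h : 3 * ((2 * (j:ℝ) + 1) + 2) ^ 2 ≤ (2 * (i:ℝ) + 1) ^ 2) :
    cc i j ≤ cc i (j + 1) := by
  rw [cc_succ]
  exact real_inc (one_le_odd i) (one_le_odd j) h

private lemma summable_base : Summable (fun n : ℕ => 1 / ((n:ℝ) + 1) ^ 2) := by
  have h := Real.summable_one_div_nat_pow.mpr (by norm_num : 1 < 2)
  have h2 := (summable_nat_add_iff (f := fun n : ℕ => 1 / (n:ℝ) ^ 2) 1).mpr h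
  refine h2.congr fun n => by push_cast; ring

private lemma summable_cc (i : ℕ) : Summable (cc i) := by
  refine Summable.of_nonneg_of_le (cc_nonneg i)
    (fun j => ?_) ((summable_base).mul_left (2 * (i:ℝ) + 1))
  unfold cc
  have hm := one_le_odd i; have hn := one_le_odd j
  have hj : (0:ℝ) ≤ (j:ℝ) := Nat.cast_nonneg j
  rw [mul_one_div, div_le_div_iff₀ (by positivity) (by positivity)]
  have h1 : ((j:ℝ) + 1) ^ 2 ≤ (2 * (j:ℝ) + 1) ^ 2 := by nlinarith
  have h2 : (2 * (j:ℝ) + 1) * ((j:ℝ) + 1) ^ 2 ≤ (2 * (j:ℝ) + 1) ^ 3 := by nlinarith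
  have h3 : (2 * (j:ℝ) + 1) ^ 3 ≤ (2 * (j:ℝ) + 1) ^ 4 := by nlinarith
  have h4 : (2 * (j:ℝ) + 1) ^ 4 ≤ ((2 * (i:ℝ) + 1) ^ 2 + (2 * (j:ℝ) + 1) ^ 2) ^ 2 := by
    nlinarith [sq_nonneg (2 * (i:ℝ) + 1), sq_nonneg ((2 * (i:ℝ) + 1) * (2 * (j:ℝ) + 1)),
      sq_nonneg ((2 * (i:ℝ) + 1) ^ 2)]
  nlinarith [mul_le_mul_of_nonneg_left ((h2.trans h3).trans h4)
    (show (0:ℝ) ≤ 2 * (i:ℝ) + 1 by linarith)]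

private noncomputable def JJ (i : ℕ) : ℕ := ⌈((2 * (i:ℝ) + 1) / Real.sqrt 3 - 1) / 2⌉₊

private lemma JJ_dec (i j : ℕ) (h : JJ i ≤ j) :
    (2 * (i:ℝ) + 1) ^ 2 ≤ 3 * (2 * (j:ℝ) + 1) ^ 2 := by
  have h1 : ((2 * (i:ℝ) + 1) / Real.sqrt 3 - 1) / 2 ≤ (JJ i : ℝ) := Nat.le_ceil _
  have h2 : ((JJ i : ℝ)) ≤ (j : ℝ) := Nat.cast_le.mpr h
  have hs : (0:ℝ) < Real.sqrt 3 := Real.sqrt_pos.mpr (by norm_num)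
  have h3 : (2 * (i:ℝ) + 1) / Real.sqrt 3 ≤ 2 * (j:ℝ) + 1 := by linarith
  have h4 : (2 * (i:ℝ) + 1) ≤ Real.sqrt 3 * (2 * (j:ℝ) + 1) := by
    rw [div_le_iff₀ hs] at h3; linarith [h3]
  have h5 : Real.sqrt 3 ^ 2 = 3 := Real.sq_sqrt (by norm_num)
  have hj : (0:ℝ) ≤ 2 * (j:ℝ) + 1 := by positivity
  nlinarith [h4, h5, hj, Real.sqrt_nonneg 3]

private lemma JJ_inc (i j : ℕ) (h : j + 2 ≤ JJ i) :
    3 * ((2 * (j:ℝ) + 1) + 2) ^ 2 ≤ (2 * (i:ℝ) + 1) ^ 2 := by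
  have h1 : (j + 1 : ℕ) < JJ i := by omega
  have h2 : ((j:ℝ) + 1) < ((2 * (i:ℝ) + 1) / Real.sqrt 3 - 1) / 2 := by
    have := Nat.lt_ceil.mp h1
    push_cast at this
    linarith
  have hs : (0:ℝ) < Real.sqrt 3 := Real.sqrt_pos.mpr (by norm_num)
  have h3 : 2 * (j:ℝ) + 3 < (2 * (i:ℝ) + 1) / Real.sqrt 3 := by linarith
  have h4 : Real.sqrt 3 * (2 * (j:ℝ) + 3) < 2 * (i:ℝ) + 1 := by
    rw [lt_div_iff₀ hs] at h3; linarith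
  have h5 : Real.sqrt 3 ^ 2 = 3 := Real.sq_sqrt (by norm_num)
  have hsn : (0:ℝ) ≤ Real.sqrt 3 * (2 * (j:ℝ) + 3) := by positivity
  have h6 : (Real.sqrt 3 * (2 * (j:ℝ) + 3)) * (Real.sqrt 3 * (2 * (j:ℝ) + 3))
      ≤ (2 * (i:ℝ) + 1) * (2 * (i:ℝ) + 1) := mul_le_mul h4.le h4.le hsn (by positivity)
  nlinarith [h6, h5]

private noncomputable def Ti (i : ℕ) : ℝ := ∑' j, (-1 : ℝ) ^ j * cc i j

private lemma Ti_cap (i : ℕ) : |Ti i| ≤ 1 / (3 * (2 * (i:ℝ) + 1) ^ 2) := by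
  refine abel_bound (cc i) (cc_nonneg i) (summable_cc i) (fun j => cc_cap i j) (JJ i)
    (fun j hj => cc_inc i j (JJ_inc i j hj)) (fun j hj => cc_dec i j (JJ_dec i j hj))

private lemma Ti_zero : 11 / 50 ≤ Ti 0 := by
  have h := alt_lower (cc 0) (summable_cc 0)
    (fun j => cc_dec 0 j (by
      have : (0:ℝ) ≤ (j:ℝ) := Nat.cast_nonneg j
      push_cast
      nlinarith)) (cc_nonneg 0)
  have e : cc 0 0 - cc 0 1 = 11 / 50 := by unfold cc; norm_num
  rw [e] at h
  exact h

private lemma summable_capseq : Summable (fun i : ℕ => 1 / (3 * (2 * (i:ℝ) + 1) ^ 2)) := by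
  refine Summable.of_nonneg_of_le (fun i => by positivity) (fun i => ?_) summable_base
  have hi : (0:ℝ) ≤ (i:ℝ) := Nat.cast_nonneg i
  rw [div_le_div_iff₀ (by positivity) (by positivity)]
  nlinarith

private lemma summable_Touter : Summable (fun i : ℕ => (-1 : ℝ) ^ i * Ti i) := by
  refine Summable.of_norm_bounded summable_capseq (fun i => ?_)
  rw [norm_mul, norm_pow, norm_neg, norm_one, one_pow, one_mul, Real.norm_eq_abs]
  exact Ti_cap i

/-- The value `h₀(0,0)` of the double alternating series is at least
`s₊/6 − s₊/9 = s₊/18 > 0` for any `s₊ > 0`. Here odd integers are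
parametrised as `m = 2i+1`, `n = 2j+1`, so that `(−1)^{(m+n−2)/2} = (−1)^{i+j}`. -/
theorem h0_center_positive (sp : ℝ) (hsp : 0 < sp) :
    (16 * sp) / (3 * π ^ 2) *
        ∑' i : ℕ, ∑' j : ℕ,
          (2 * (i : ℝ) + 1) * (2 * (j : ℝ) + 1)
              / ((2 * (i : ℝ) + 1) ^ 2 + (2 * (j : ℝ) + 1) ^ 2) ^ 2
            * (-1 : ℝ) ^ (i + j)
      ≥ sp / 6 - sp / 9 ∧ sp / 6 - sp / 9 = sp / 18 ∧ 0 < sp / 18 := by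
  have hrw : ∀ i : ℕ, (∑' j : ℕ,
      (2 * (i : ℝ) + 1) * (2 * (j : ℝ) + 1)
        / ((2 * (i : ℝ) + 1) ^ 2 + (2 * (j : ℝ) + 1) ^ 2) ^ 2 * (-1 : ℝ) ^ (i + j))
      = (-1 : ℝ) ^ i * Ti i := by
    intro i
    unfold Ti
    rw [← tsum_mul_left]
    refine tsum_congr fun j => ?_
    rw [pow_add]
    unfold cc
    ring
  have hsum_eq : (∑' i : ℕ, ∑' j : ℕ,
      (2 * (i : ℝ) + 1) * (2 * (j : ℝ) + 1)
        / ((2 * (i : ℝ) + 1) ^ 2 + (2 * (j : ℝ) + 1) ^ 2) ^ 2 * (-1 : ℝ) ^ (i + j))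
      = ∑' i : ℕ, (-1 : ℝ) ^ i * Ti i := tsum_congr hrw
  -- tail bound
  set f : ℕ → ℝ := fun i => 1 / (12 * ((i:ℝ) + 1)) with hf
  set d : ℕ → ℝ := fun i => f i - f (i + 1) with hd
  have hd_eq : ∀ i, d i = 1 / (12 * ((i:ℝ) + 1) * ((i:ℝ) + 2)) := by
    intro i
    have h1 : (0:ℝ) < (i:ℝ) + 1 := by positivity
    have h2 : (0:ℝ) < (i:ℝ) + 2 := by positivity
    simp only [hd, hf]
    push_cast
    field_simp
    ring
  have hd_nonneg : ∀ i, 0 ≤ d i := by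
    intro i; rw [hd_eq i]; positivity
  have hd_le : ∀ i, d i ≤ 1 / ((i:ℝ) + 1) ^ 2 := by
    intro i
    rw [hd_eq i, div_le_div_iff₀ (by positivity) (by positivity)]
    have : (0:ℝ) ≤ (i:ℝ) := Nat.cast_nonneg i
    nlinarith
  have hd_sum : Summable d := Summable.of_nonneg_of_le hd_nonneg hd_le summable_base
  have hd_tsum : ∑' i, d i ≤ 1 / 12 := by
    refine Summable.tsum_le_of_sum_range_le hd_sum (fun n => ?_)
    have : ∑ i ∈ Finset.range n, d i = f 0 - f n := Finset.sum_range_sub' f n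
    rw [this]
    have h0 : f 0 = 1 / 12 := by simp [hf]
    have h1 : 0 ≤ f n := by simp only [hf]; positivity
    linarith
  have hs1 : Summable (fun i : ℕ => (-1 : ℝ) ^ (i + 1) * Ti (i + 1)) :=
    (summable_nat_add_iff 1).mpr summable_Touter
  have hpt : ∀ i : ℕ, -d i ≤ (-1 : ℝ) ^ (i + 1) * Ti (i + 1) := by
    intro i
    have h1 : |(-1 : ℝ) ^ (i + 1) * Ti (i + 1)| = |Ti (i + 1)| := by
      rw [abs_mul, abs_pow, abs_neg, abs_one, one_pow, one_mul]
    have h2 := Ti_cap (i + 1)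
    have h3 : 1 / (3 * (2 * ((i:ℝ) + 1) + 1) ^ 2) ≤ d i := by
      rw [hd_eq i, div_le_div_iff₀ (by positivity) (by positivity)]
      have : (0:ℝ) ≤ (i:ℝ) := Nat.cast_nonneg i
      nlinarith
    have h4 : |Ti (i + 1)| ≤ d i := by
      refine le_trans ?_ h3
      have : ((i + 1 : ℕ) : ℝ) = (i:ℝ) + 1 := by push_cast; ring
      rw [← this]
      exact h2
    have h5 := neg_abs_le ((-1 : ℝ) ^ (i + 1) * Ti (i + 1))
    rw [h1] at h5
    linarith
  have htail : -(1/12 : ℝ) ≤ ∑' i : ℕ, (-1 : ℝ) ^ (i + 1) * Ti (i + 1) := by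
    have h1 : ∑' i : ℕ, -d i ≤ ∑' i : ℕ, (-1 : ℝ) ^ (i + 1) * Ti (i + 1) :=
      Summable.tsum_le_tsum hpt hd_sum.neg hs1
    rw [tsum_neg] at h1
    linarith [hd_tsum]
  have hsplit : ∑' i : ℕ, (-1 : ℝ) ^ i * Ti i
      = Ti 0 + ∑' i : ℕ, (-1 : ℝ) ^ (i + 1) * Ti (i + 1) := by
    rw [Summable.tsum_eq_zero_add summable_Touter]
    norm_num
  have htotal : (41/300 : ℝ) ≤ ∑' i : ℕ, (-1 : ℝ) ^ i * Ti i := by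
    rw [hsplit]
    have := Ti_zero
    linarith [htail]
  refine ⟨?_, by ring, by positivity⟩
  rw [hsum_eq, ge_iff_le]
  have hpi : π < 3.15 := Real.pi_lt_d2
  have hpi0 : 0 < π := Real.pi_pos
  have hpi2 : π ^ 2 < 9.9225 := by nlinarith
  have hc : (0:ℝ) < 3 * π ^ 2 := by positivity
  have hco : (0:ℝ) ≤ 16 * sp / (3 * π ^ 2) := by positivity
  have step1 : 16 * sp / (3 * π ^ 2) * (41/300) ≤ 16 * sp / (3 * π ^ 2) * ∑' i : ℕ, (-1 : ℝ) ^ i * Ti i :=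
    mul_le_mul_of_nonneg_left htotal hco
  have step0 : sp / 6 - sp / 9 ≤ 16 * sp / (3 * π ^ 2) * (41/300) := by
    rw [div_mul_eq_mul_div, le_div_iff₀ hc]
    nlinarith [mul_lt_mul_of_pos_left hpi2 hsp]
  linarith
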